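/- For every n ≥ 1, #Ξ_n = F_{n+2} + 1; equivalently, #(Θ_1 ∪ ⋯ ∪ Θ_n) = F_1 + F_2 + ⋯ + F_n = F_{n+2} − 1. -/
import Mathlib


open Set Filter

/-- The mediant of two rationals (written in lowest terms). -/
def mediant (x y : ℚ) : ℚ :=
  ((x.num + y.num : ℤ) : ℚ) / ((x.den + y.den : ℕ) : ℚ)

/-- `x` and `y` are consecutive elements of the set `S`. -/
def IsConsecutive (S : Set ℚ) (x y : ℚ) : Prop :=
  x ∈ S ∧ y ∈ S ∧ x < y ∧ ∀ z ∈ S, ¬ (x < z ∧ z < y)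

/-- The Stern–Brocot sequences `ℱ_n`. -/
def sternBrocot : ℕ → Set ℚ
  | 0 => {0, 1}
  | n + 1 => sternBrocot n ∪
      {z | ∃ x y : ℚ, IsConsecutive (sternBrocot n) x y ∧ z = mediant x y}

/-- `Q_n`, the set of mediants newly inserted at step `n ≥ 1` of the
Stern–Brocot construction. -/
def newMediants (n : ℕ) : Set ℚ :=
  {z | ∃ x y : ℚ, IsConsecutive (sternBrocot (n - 1)) x y ∧ z = mediant x y}

/-- Value of the regular continued fraction `[0; a_1, …, a_m]`. -/
def cfVal : List ℕ → ℚ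
  | [] => 0
  | a :: t => 1 / ((a : ℚ) + cfVal t)

/-- `a` is the regular continued fraction expansion `[0; a_1, …, a_m]` of `x`,
with all partial quotients positive and the last one at least `2`. -/
def IsCF (x : ℚ) (a : List ℕ) : Prop :=
  (∀ ai ∈ a, 1 ≤ ai) ∧ 2 ≤ a.getLastD 0 ∧ x = cfVal a

/-- Value of `b_1 - 1/(b_2 - ⋯ - 1/b_l)` (using the convention `1/0 = 0`,
so that `rrTail [b] = b`). -/
def rrTail : List ℕ → ℚ
  | [] => 0
  | b :: t => (b : ℚ) - 1 / rrTail t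

/-- Value of the regular reduced continued fraction
`[[1; b_1, …, b_l]] = 1 - 1/(b_1 - 1/(b_2 - ⋯ - 1/b_l))`. -/
def rrcfVal (b : List ℕ) : ℚ := 1 - 1 / rrTail b

/-- `b` is the regular reduced continued fraction expansion
`[[1; b_1, …, b_l]]` of `x`, with all entries at least `2`. -/
def IsRRCF (x : ℚ) (b : List ℕ) : Prop :=
  (∀ bi ∈ b, 2 ≤ bi) ∧ x = rrcfVal b

/-- compositions of m into parts ≥ 2 -/
def comps : ℕ → Finset (List ℕ)
  | 0 => {[]}
  | 1 => ∅
  | (m+2) => ((comps m).image (fun l => 2 :: l)) ∪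
      ((comps (m+1)).image (fun l => (l.headI + 1) :: l.tail))

lemma mem_comps : ∀ m (l : List ℕ), l ∈ comps m ↔ (∀ b ∈ l, 2 ≤ b) ∧ l.sum = m := by
  intro m
  induction m using Nat.twoStepInduction with
  | zero =>
    intro l
    simp only [comps, Finset.mem_singleton]
    constructor
    · rintro rfl; simp
    · rintro ⟨h1, h2⟩
      cases l with
      | nil => rfl
      | cons b t => have := h1 b (by simp); simp [List.sum_cons] at h2; omega
  | one =>
    intro l
    simp only [comps, Finset.notMem_empty, false_iff]
    rintro ⟨h1, h2⟩
    cases l with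
    | nil => simp at h2
    | cons b t => have := h1 b (by simp); simp [List.sum_cons] at h2; omega
  | more m ih ih1 =>
    intro l
    simp only [comps, Finset.mem_union, Finset.mem_image]
    constructor
    · rintro (⟨t, ht, rfl⟩ | ⟨t, ht, rfl⟩)
      · obtain ⟨h1, h2⟩ := (ih t).mp ht
        refine ⟨?_, by simp [h2]; omega⟩
        intro b hb
        rcases List.mem_cons.mp hb with rfl | hb
        · exact le_refl 2
        · exact h1 b hb
      · obtain ⟨h1, h2⟩ := (ih1 t).mp ht
        have hne : t ≠ [] := by rintro rfl; simp at h2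
        obtain ⟨a, s, rfl⟩ := List.exists_cons_of_ne_nil hne
        simp only [List.headI_cons, List.tail_cons]
        constructor
        · intro b hb
          rcases List.mem_cons.mp hb with rfl | hb
          · have := h1 a (by simp); omega
          · exact h1 b (by simp [hb])
        · simp only [List.sum_cons] at h2 ⊢; omega
    · rintro ⟨h1, h2⟩
      cases l with
      | nil => simp at h2
      | cons b t =>
        have hb2 : 2 ≤ b := h1 b (by simp)
        simp only [List.sum_cons] at h2
        rcases eq_or_lt_of_le hb2 with rfl | hb3
        · left
          exact ⟨t, (ih t).mpr ⟨fun x hx => h1 x (by simp [hx]), by omega⟩, rfl⟩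
        · right
          refine ⟨(b - 1) :: t, (ih1 _).mpr ⟨?_, ?_⟩, ?_⟩
          · intro x hx
            rcases List.mem_cons.mp hx with rfl | hx
            · omega
            · exact h1 x (by simp [hx])
          · simp only [List.sum_cons]; omega
          · simp only [List.headI_cons, List.tail_cons]
            congr 1; omega

lemma card_comps_rec (m : ℕ) :
    (comps (m+2)).card = (comps (m+1)).card + (comps m).card := by
  have hdisj : Disjoint ((comps m).image (fun l => 2 :: l))
      ((comps (m+1)).image (fun l => (l.headI + 1) :: l.tail)) := by
    rw [Finset.disjoint_left]
    rintro x hx hy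
    simp only [Finset.mem_image] at hx hy
    obtain ⟨t, ht, rfl⟩ := hx
    obtain ⟨s, hs, he⟩ := hy
    have h2 := (mem_comps _ s).mp hs
    have hne : s ≠ [] := by rintro rfl; simp at h2
    obtain ⟨a, s', rfl⟩ := List.exists_cons_of_ne_nil hne
    have := h2.1 a (by simp)
    simp only [List.headI_cons, List.tail_cons, List.cons.injEq] at he
    omega
  rw [comps, Finset.card_union_of_disjoint hdisj,
    Finset.card_image_of_injective _ (fun a b h => by injection h),
    Finset.card_image_of_injOn, Nat.add_comm]
  intro a ha b hb he
  have h2a := (mem_comps _ a).mp ha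
  have h2b := (mem_comps _ b).mp hb
  have hnea : a ≠ [] := by rintro rfl; simp at h2a
  have hneb : b ≠ [] := by rintro rfl; simp at h2b
  obtain ⟨x, a', rfl⟩ := List.exists_cons_of_ne_nil hnea
  obtain ⟨y, b', rfl⟩ := List.exists_cons_of_ne_nil hneb
  simp only [List.headI_cons, List.tail_cons, List.cons.injEq] at he
  obtain ⟨h1, rfl⟩ := he
  have : x = y := by omega
  subst this; rfl

lemma card_comps : ∀ m, (comps (m+1)).card = Nat.fib m := by
  intro m
  induction m using Nat.twoStepInduction with
  | zero => simp [comps]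
  | one => rw [show (1:ℕ)+1 = 0+2 by rfl, card_comps_rec]; simp [comps]
  | more m ih ih1 =>
    rw [show m+2+1 = (m+1)+2 by ring, card_comps_rec, ih1, ih, Nat.fib_add_two,
      Nat.add_comm]

lemma rrTail_gt_one : ∀ l : List ℕ, l ≠ [] → (∀ b ∈ l, 2 ≤ b) → 1 < rrTail l := by
  intro l
  induction l with
  | nil => simp
  | cons b t ih =>
    intro _ hv
    have hb : 2 ≤ b := hv b (by simp)
    have hb' : (2:ℚ) ≤ b := by exact_mod_cast hb
    rw [rrTail]
    rcases eq_or_ne t [] with rfl | hne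
    · simp only [rrTail]; simp; linarith
    · have h1 : 1 < rrTail t := ih hne (fun x hx => hv x (by simp [hx]))
      have h2 : 1 / rrTail t < 1 := by
        rw [div_lt_one (by linarith)]; linarith
      linarith

/-- `1/rrTail l ∈ [0,1)` for valid `l`, and `= 0` iff `l = []`. -/
lemma inv_rrTail_bounds (l : List ℕ) (hv : ∀ b ∈ l, 2 ≤ b) :
    0 ≤ 1 / rrTail l ∧ 1 / rrTail l < 1 ∧ (1 / rrTail l = 0 ↔ l = []) := by
  rcases eq_or_ne l [] with rfl | hne
  · simp [rrTail]
  · have h1 := rrTail_gt_one l hne hv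
    have h0 : (0:ℚ) < rrTail l := by linarith
    refine ⟨by positivity, by rw [div_lt_one h0]; linarith, ?_⟩
    simp only [hne, iff_false]
    positivity

lemma rrTail_inj : ∀ l l' : List ℕ, l ≠ [] → l' ≠ [] →
    (∀ b ∈ l, 2 ≤ b) → (∀ b ∈ l', 2 ≤ b) → rrTail l = rrTail l' → l = l' := by
  intro l
  induction l with
  | nil => simp
  | cons b t ih =>
    intro l' _ hne' hv hv' heq
    obtain ⟨b', t', rfl⟩ := List.exists_cons_of_ne_nil hne'
    have hvt : ∀ x ∈ t, 2 ≤ x := fun x hx => hv x (by simp [hx])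
    have hvt' : ∀ x ∈ t', 2 ≤ x := fun x hx => hv' x (by simp [hx])
    obtain ⟨hu0, hu1, hue⟩ := inv_rrTail_bounds t hvt
    obtain ⟨hu0', hu1', hue'⟩ := inv_rrTail_bounds t' hvt'
    simp only [rrTail] at heq
    have hbb : b = b' := by
      have h2 : (b:ℚ) < (b':ℚ) + 1 := by linarith
      have h3 : (b':ℚ) < (b:ℚ) + 1 := by linarith
      have h2' : b < b' + 1 := by exact_mod_cast h2
      have h3' : b' < b + 1 := by exact_mod_cast h3
      omega
    subst hbb
    have hut : 1 / rrTail t = 1 / rrTail t' := by linarith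
    rcases eq_or_ne t [] with rfl | htne
    · have : 1 / rrTail t' = 0 := by simp [rrTail] at hut ⊢; linarith [hut]
      have := hue'.mp this
      rw [this]
    · have ht'ne : t' ≠ [] := by
        intro h; subst h
        have : 1 / rrTail t = 0 := by rw [hut]; simp [rrTail]
        exact htne (hue.mp this)
      have h1 : 1 < rrTail t := rrTail_gt_one t htne hvt
      have h1' : 1 < rrTail t' := rrTail_gt_one t' ht'ne hvt'
      have : rrTail t = rrTail t' := by
        field_simp at hut
        linarith
      rw [ih t' htne ht'ne hvt hvt' this]

lemma rrcfVal_inj (l l' : List ℕ) (h : l ≠ []) (h' : l' ≠ [])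
    (hv : ∀ b ∈ l, 2 ≤ b) (hv' : ∀ b ∈ l', 2 ≤ b)
    (heq : rrcfVal l = rrcfVal l') : l = l' := by
  have h1 : 1 < rrTail l := rrTail_gt_one l h hv
  have h1' : 1 < rrTail l' := rrTail_gt_one l' h' hv'
  apply rrTail_inj l l' h h' hv hv'
  unfold rrcfVal at heq
  have : 1 / rrTail l = 1 / rrTail l' := by linarith
  field_simp at this
  linarith

lemma rrcfVal_mem_Ioo (l : List ℕ) (h : l ≠ []) (hv : ∀ b ∈ l, 2 ≤ b) :
    rrcfVal l ∈ Set.Ioo (0:ℚ) 1 := by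
  have h1 : 1 < rrTail l := rrTail_gt_one l h hv
  have h0 : (0:ℚ) < rrTail l := by linarith
  constructor
  · rw [rrcfVal]; have : 1 / rrTail l < 1 := by rw [div_lt_one h0]; linarith
    linarith
  · rw [rrcfVal]; have : 0 < 1 / rrTail l := by positivity
    linarith


/-- `Θ_k`: rationals in `(0,1)` whose regular reduced continued fraction
expansion satisfies `L(x) = b_1 + ⋯ + b_l = k + 1`. -/
def Theta (k : ℕ) : Set ℚ :=
  {x | x ∈ Set.Ioo (0 : ℚ) 1 ∧ ∃ b : List ℕ, IsRRCF x b ∧ b.sum = k + 1}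

/-- `Ξ_n = {0, 1} ∪ Θ_1 ∪ ⋯ ∪ Θ_n`. -/
def Xi (n : ℕ) : Set ℚ :=
  {0, 1} ∪ ⋃ k ∈ Finset.Icc 1 n, Theta k

def ThetaF (k : ℕ) : Finset ℚ := (comps (k+1)).image rrcfVal

lemma comps_ne_nil {m : ℕ} {l : List ℕ} (hl : l ∈ comps m) (hm : m ≠ 0) : l ≠ [] := by
  rintro rfl
  have := (mem_comps m []).mp hl
  simp at this
  exact hm this.symm

lemma mem_ThetaF_iff {k : ℕ} (hk : 1 ≤ k) (x : ℚ) : x ∈ ThetaF k ↔ x ∈ Theta k := by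
  simp only [ThetaF, Finset.mem_image, Theta, Set.mem_setOf_eq]
  constructor
  · rintro ⟨b, hb, rfl⟩
    obtain ⟨hv, hs⟩ := (mem_comps _ b).mp hb
    have hne : b ≠ [] := comps_ne_nil hb (by omega)
    exact ⟨rrcfVal_mem_Ioo b hne hv, b, ⟨hv, rfl⟩, hs⟩
  · rintro ⟨_, b, ⟨hv, rfl⟩, hs⟩
    exact ⟨b, (mem_comps _ b).mpr ⟨hv, hs⟩, rfl⟩

lemma card_ThetaF {k : ℕ} (hk : 1 ≤ k) : (ThetaF k).card = Nat.fib k := by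
  rw [ThetaF, Finset.card_image_of_injOn, show k + 1 = k + 1 from rfl, card_comps]
  intro a ha b hb he
  obtain ⟨hva, _⟩ := (mem_comps _ a).mp ha
  obtain ⟨hvb, _⟩ := (mem_comps _ b).mp hb
  exact rrcfVal_inj a b (comps_ne_nil ha (by omega)) (comps_ne_nil hb (by omega)) hva hvb he

lemma disj_ThetaF {k j : ℕ} (hk : 1 ≤ k) (hj : 1 ≤ j) (hkj : k ≠ j) :
    Disjoint (ThetaF k) (ThetaF j) := by
  rw [Finset.disjoint_left]
  rintro x hx hy
  simp only [ThetaF, Finset.mem_image] at hx hy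
  obtain ⟨a, ha, rfl⟩ := hx
  obtain ⟨b, hb, he⟩ := hy
  obtain ⟨hva, hsa⟩ := (mem_comps _ a).mp ha
  obtain ⟨hvb, hsb⟩ := (mem_comps _ b).mp hb
  have := rrcfVal_inj b a (comps_ne_nil hb (by omega)) (comps_ne_nil ha (by omega))
    hvb hva he
  subst this
  omega

/-- `#Ξ_n = F_{n+2} + 1`, equivalently
`#(Θ_1 ∪ ⋯ ∪ Θ_n) = F_1 + ⋯ + F_n = F_{n+2} - 1`. -/
theorem ncard_Xi_eq_fib :
    ∀ n : ℕ, 1 ≤ n →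
      (Xi n).ncard = Nat.fib (n + 2) + 1 ∧
      (⋃ k ∈ Finset.Icc 1 n, Theta k).ncard = ∑ k ∈ Finset.Icc 1 n, Nat.fib k ∧
      ∑ k ∈ Finset.Icc 1 n, Nat.fib k = Nat.fib (n + 2) - 1 := by
  intro n hn
  set U : Finset ℚ := (Finset.Icc 1 n).biUnion ThetaF with hU
  have hUcoe : (↑U : Set ℚ) = ⋃ k ∈ Finset.Icc 1 n, Theta k := by
    ext x
    simp only [hU, Finset.coe_biUnion, Set.mem_iUnion, Finset.mem_coe, Set.mem_iUnion]
    constructor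
    · rintro ⟨k, hk, hx⟩
      exact ⟨k, hk, (mem_ThetaF_iff (Finset.mem_Icc.mp hk).1 x).mp hx⟩
    · rintro ⟨k, hk, hx⟩
      exact ⟨k, hk, (mem_ThetaF_iff (Finset.mem_Icc.mp hk).1 x).mpr hx⟩
  have hcardU : U.card = ∑ k ∈ Finset.Icc 1 n, Nat.fib k := by
    rw [hU, Finset.card_biUnion]
    · exact Finset.sum_congr rfl fun k hk => card_ThetaF (Finset.mem_Icc.mp hk).1
    · intro k hk j hj hkj
      exact disj_ThetaF (Finset.mem_Icc.mp hk).1 (Finset.mem_Icc.mp hj).1 hkj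
  have hsum : ∑ k ∈ Finset.Icc 1 n, Nat.fib k = Nat.fib (n + 2) - 1 := by
    have h := Nat.fib_succ_eq_succ_sum (n + 1)
    have h2 : ∑ k ∈ Finset.range (n + 1), Nat.fib k
        = ∑ k ∈ Finset.Icc 1 n, Nat.fib k := by
      rw [← Finset.Ico_add_one_right_eq_Icc, Finset.range_eq_Ico,
        ← Finset.sum_Ico_consecutive _ (Nat.zero_le 1) (by omega : 1 ≤ n + 1)]
      simp
    rw [h2] at h
    have h' : Nat.fib (n + 2) = (∑ k ∈ Finset.Icc 1 n, Nat.fib k) + 1 := h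
    omega
  have hmemIoo : ∀ x ∈ U, x ∈ Set.Ioo (0:ℚ) 1 := by
    intro x hx
    simp only [hU, Finset.mem_biUnion, ThetaF, Finset.mem_image] at hx
    obtain ⟨k, hk, b, hb, rfl⟩ := hx
    obtain ⟨hv, _⟩ := (mem_comps _ b).mp hb
    exact rrcfVal_mem_Ioo b (comps_ne_nil hb (by omega)) hv
  have h1U : (1:ℚ) ∉ U := fun h => absurd (hmemIoo 1 h).2 (lt_irrefl 1)
  have h0U : (0:ℚ) ∉ insert (1:ℚ) U := by
    simp only [Finset.mem_insert]
    push_neg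
    exact ⟨by norm_num, fun h => absurd (hmemIoo 0 h).1 (lt_irrefl 0)⟩
  have hXi : Xi n = ↑(insert (0:ℚ) (insert 1 U)) := by
    rw [Xi, Finset.coe_insert, Finset.coe_insert, hUcoe]
    rw [show ({0, 1} : Set ℚ) = insert 0 {1} from rfl, Set.insert_union,
      Set.singleton_union]
  have hfibpos : 1 ≤ Nat.fib (n + 2) := Nat.fib_pos.mpr (by omega)
  refine ⟨?_, ?_, hsum⟩
  · rw [hXi, Set.ncard_coe_finset, Finset.card_insert_of_notMem h0U,
      Finset.card_insert_of_notMem h1U, hcardU, hsum]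
    omega
  · rw [← hUcoe, Set.ncard_coe_finset, hcardU]
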